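/- Let H ⊂ G be algebraic groups with Lie algebras 𝔥 ⊂ 𝔤 and suppose c ∈ Sym²(𝔤)^G maps to zero in Sym²(𝔤/𝔥)^H. Fix a splitting 𝔤 = 𝔥 ⊕ 𝔤/𝔥 and write c = P + Q. Define F on generators of the Chevalley–Eilenberg complex by F(eⁱ) = eⁱ + (1/2)P^{ij}e_j and F(ẽⁱ) = Q^{ji}e_j, extended as a map of graded commutative algebras C•(𝔤, k) → C•(𝔥, Sym(𝔥[-1])). Then F is a cochain map: it intertwines the Chevalley–Eilenberg differential of 𝔤 with the differential on C•(𝔥, Sym(𝔥[-1])) twisted by the quasi-Lie bialgebra structure (δ, φ) given by δ^{ij}_k = (1/2)(A^j_{ka}Q^{ia} − A^i_{ka}Q^{ja}) and φ^{ijk} = (1/8)f^i_{ab}P^{aj}P^{bk} + (1/4)Q^{ia}(C^k_{ab}Q^{jb} − C^j_{ab}Q^{kb}) + (1/8)P^{ia}(A^k_{ab}Q^{jb} − A^j_{ab}Q^{kb}). -/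
import Mathlib


/-!
STATEMENT 13: Let `𝔥 ⊂ 𝔤` with a splitting `𝔤 = 𝔥 ⊕ 𝔤/𝔥`, bases `{e_i}` of `𝔥` and
`{ẽ_i}` of `𝔤/𝔥` with dual bases `{eⁱ}`, `{ẽⁱ}`, structure constants `f, A, B, C, D`,
and `c = P + Q ∈ Sym²(𝔤)^G` vanishing in `Sym²(𝔤/𝔥)`.  Define the algebra map
`F : C•(𝔤, k) → C•(𝔥, Sym(𝔥[-1]))` on generators by `F(eⁱ) = eⁱ + (1/2)P^{ij}e_j`,
`F(ẽⁱ) = Q^{ji}e_j`.  Then `F` is a cochain map intertwining the Chevalley–Eilenberg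
differential of `𝔤` with the differential twisted by the quasi-Lie bialgebra structure
`(δ, φ)` given by the coisotropic-reduction formulas.

Since `F` is an algebra map and both differentials are derivations, `F` is a cochain map
iff `F(d x) = d(F x)` on the generators `ẽⁱ`, `eⁱ`; comparing coefficients this is
exactly the three structure-constant identities in the conclusion below
(the displayed equations of the paper's proof).  The `G`-invariance of `c`
is encoded by the five identities (1)–(5), which are the hypotheses.
-/

open Finset

variable {k ι : Type*} [Field k] [CharZero k] [Fintype ι] [DecidableEq ι]

/-- `δ^{ij}_k = (1/2)(A^j_{ka} Q^{ia} − A^i_{ka} Q^{ja})`. -/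
def deltaForm (A : ι → ι → ι → k) (Q : ι → ι → k) (kk i j : ι) : k :=
  (1/2 : k) * ∑ a, (A kk a j * Q i a - A kk a i * Q j a)

/-- `φ^{ijk} = (1/8) f^i_{ab} P^{aj} P^{bk} + (1/4) Q^{ia}(C^k_{ab} Q^{jb} − C^j_{ab} Q^{kb})
  + (1/8) P^{ia}(A^k_{ab} Q^{jb} − A^j_{ab} Q^{kb})`. -/
def phiForm (f A C : ι → ι → ι → k) (P Q : ι → ι → k) (i j l : ι) : k :=
  (1/8 : k) * (∑ a, ∑ b, f a b i * P a j * P b l)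
    + (1/4 : k) * (∑ a, ∑ b, Q i a * (C a b l * Q j b - C a b j * Q l b))
    + (1/8 : k) * (∑ a, ∑ b, P i a * (A a b l * Q j b - A a b j * Q l b))

/-- Under the invariance identities (1)–(5) for `c = P + Q`, the
generator-level cochain-map identities for
`F(eⁱ) = eⁱ + (1/2)P^{ij}e_j`, `F(ẽⁱ) = Q^{ji}e_j` hold, i.e. `F(d ẽⁱ) = d F(ẽⁱ)` and
`F(d eⁱ) = d F(eⁱ)` where the target differential is twisted by `(δ, φ)` given by
`deltaForm` and `phiForm`; hence `F` is a cochain map. -/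
theorem coisotropic_cochain_map
    (f A B C D : ι → ι → ι → k) (P Q : ι → ι → k)
    (hf : ∀ i j l, f i j l = - f j i l)
    (hC : ∀ i j l, C i j l = - C j i l)
    (hD : ∀ i j l, D i j l = - D j i l)
    (hP : ∀ i j, P i j = P j i)
    (h1 : ∀ i a kk, ∑ j, (A j kk i * P j a + C j kk i * Q a j
            + A j kk a * P j i + C j kk a * Q i j) = 0)
    (h2 : ∀ i a j, ∑ kk, (A j kk i * Q a kk - f kk j i * P kk a
            + A j kk a * Q i kk - f kk j a * P kk i) = 0)
    (h3 : ∀ i a kk, ∑ j, (A j kk i * Q j a + B j kk a * P i j + D j kk a * Q i j) = 0)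
    (h4 : ∀ i a j, ∑ kk, f kk j i * Q kk a = ∑ kk, B j kk a * Q i kk)
    (h5 : ∀ i a kk, ∑ j, (B j kk i * Q j a + B j kk a * Q j i) = 0) :
    -- compatibility on the generators `ẽⁱ`:
    (∀ i a b, ∑ c, Q c i * deltaForm A Q c a b =
        (1/2 : k) * ((∑ j, ∑ kk, (B j kk i * P j a * Q b kk + D j kk i * Q a j * Q b kk))
          - (∑ j, ∑ kk, (B j kk i * P j b * Q a kk + D j kk i * Q b j * Q a kk)))) ∧
    -- compatibility on the generators `eⁱ`, linear part:
    (∀ i j b, (∑ kk, P i kk * f kk j b) - 2 * deltaForm A Q j i b =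
        2 * (∑ kk, A j kk i * Q b kk) + ∑ kk, f j kk i * P kk b) ∧
    -- compatibility on the generators `eⁱ`, quadratic part:
    (∀ i a b, phiForm f A C P Q i a b + (1/4 : k) * ∑ c, P i c * deltaForm A Q c a b =
        (1/4 : k) * (∑ j, ∑ kk, A j kk i * P j a * Q b kk)
          - (1/4 : k) * (∑ j, ∑ kk, A j kk i * P j b * Q a kk)
          + (1/2 : k) * (∑ j, ∑ kk, C j kk i * Q a j * Q b kk)
          + (1/8 : k) * (∑ j, ∑ kk, f j kk i * P j a * P kk b)) := by
  refine ⟨?_, ?_, ?_⟩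
  · intro i a b
    have key : ∀ b' x, ∑ c, (A c x b' * Q c i) = - ∑ j, (B j x i * P b' j + D j x i * Q b' j) := by
      intro b' x
      have h := h3 b' i x
      simp only [Finset.sum_add_distrib] at h ⊢
      linear_combination h
    calc ∑ c, Q c i * deltaForm A Q c a b
        = ∑ c, ∑ x, ((1/2) * (Q a x * (A c x b * Q c i)) - (1/2) * (Q b x * (A c x a * Q c i))) := by
          apply Finset.sum_congr rfl; intro c _
          simp only [deltaForm, Finset.mul_sum]
          apply Finset.sum_congr rfl; intro x _; ring
      _ = ∑ x, ∑ c, ((1/2) * (Q a x * (A c x b * Q c i)) - (1/2) * (Q b x * (A c x a * Q c i))) :=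
          Finset.sum_comm
      _ = ∑ x, ((1/2) * (Q a x * ∑ c, (A c x b * Q c i)) - (1/2) * (Q b x * ∑ c, (A c x a * Q c i))) := by
          apply Finset.sum_congr rfl; intro x _
          simp only [Finset.mul_sum, Finset.sum_sub_distrib]
      _ = ∑ x, ((1/2) * (Q b x * ∑ j, (B j x i * P a j + D j x i * Q a j))
            - (1/2) * (Q a x * ∑ j, (B j x i * P b j + D j x i * Q b j))) := by
          apply Finset.sum_congr rfl; intro x _
          rw [key a x, key b x]; ring
      _ = ∑ x, ∑ j, ((1/2) * (Q b x * (B j x i * P a j + D j x i * Q a j))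
            - (1/2) * (Q a x * (B j x i * P b j + D j x i * Q b j))) := by
          apply Finset.sum_congr rfl; intro x _
          simp only [Finset.mul_sum, Finset.sum_sub_distrib]
      _ = ∑ j, ∑ x, ((1/2) * (Q b x * (B j x i * P a j + D j x i * Q a j))
            - (1/2) * (Q a x * (B j x i * P b j + D j x i * Q b j))) := Finset.sum_comm
      _ = ∑ j, ((1/2) * (∑ kk, (B j kk i * P j a * Q b kk + D j kk i * Q a j * Q b kk))
            - (1/2) * (∑ kk, (B j kk i * P j b * Q a kk + D j kk i * Q b j * Q a kk))) := by
          apply Finset.sum_congr rfl; intro j _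
          simp only [Finset.mul_sum, Finset.sum_sub_distrib]
          congr 1 <;> (apply Finset.sum_congr rfl; intro x _; simp only [hP a j, hP b j]; ring)
      _ = (1/2 : k) * ((∑ j, ∑ kk, (B j kk i * P j a * Q b kk + D j kk i * Q a j * Q b kk))
            - (∑ j, ∑ kk, (B j kk i * P j b * Q a kk + D j kk i * Q b j * Q a kk))) := by
          simp only [Finset.sum_sub_distrib, ← Finset.mul_sum]
          ring
  · intro i j b
    have key : ∑ kk, ((P i kk * f kk j b - (A j kk b * Q i kk - A j kk i * Q b kk))
        - (2 * (A j kk i * Q b kk) + f j kk i * P kk b)) = 0 := by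
      rw [← neg_eq_zero, ← Finset.sum_neg_distrib, ← h2 i b j]
      apply Finset.sum_congr rfl
      intro kk _
      rw [hf j kk i, hP i kk]
      ring
    simp only [Finset.sum_sub_distrib, Finset.sum_add_distrib, ← Finset.mul_sum] at key
    simp only [deltaForm, Finset.sum_sub_distrib]
    linear_combination key
  · intro i a b
    have hδ : (1/4 : k) * ∑ c, P i c * deltaForm A Q c a b
        = (1/8 : k) * ∑ c, ∑ x, (P i c * (A c x b * Q a x - A c x a * Q b x)) := by
      rw [Finset.mul_sum, Finset.mul_sum]
      apply Finset.sum_congr rfl; intro c _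
      simp only [deltaForm, Finset.mul_sum]
      apply Finset.sum_congr rfl; intro x _; ring
    have keyA : ∀ b' y, ∑ x, (A x y b' * P x i + C x y b' * Q i x)
        = - ∑ x, (A x y i * P x b' + C x y i * Q b' x) := by
      intro b' y
      have h := h1 i b' y
      simp only [Finset.sum_add_distrib] at h ⊢
      linear_combination h
    have cA1 : ∑ y, ∑ x, Q b y * (A x y i * P x a) = ∑ j, ∑ kk, A j kk i * P j a * Q b kk := by
      rw [Finset.sum_comm]
      apply Finset.sum_congr rfl; intro x _
      apply Finset.sum_congr rfl; intro y _; ring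
    have cA2 : ∑ y, ∑ x, Q a y * (A x y i * P x b) = ∑ j, ∑ kk, A j kk i * P j b * Q a kk := by
      rw [Finset.sum_comm]
      apply Finset.sum_congr rfl; intro x _
      apply Finset.sum_congr rfl; intro y _; ring
    have cC1 : ∑ y, ∑ x, Q b y * (C x y i * Q a x) = ∑ j, ∑ kk, C j kk i * Q a j * Q b kk := by
      rw [Finset.sum_comm]
      apply Finset.sum_congr rfl; intro x _
      apply Finset.sum_congr rfl; intro y _; ring
    have cC2 : ∑ y, ∑ x, Q a y * (C x y i * Q b x)
        = - ∑ j, ∑ kk, (C j kk i * Q a j * Q b kk) := by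
      calc ∑ y, ∑ x, Q a y * (C x y i * Q b x)
          = ∑ y, ∑ x, -(C y x i * Q a y * Q b x) := by
            apply Finset.sum_congr rfl; intro y _
            apply Finset.sum_congr rfl; intro x _
            rw [hC x y i]; ring
        _ = - ∑ j, ∑ kk, (C j kk i * Q a j * Q b kk) := by
            simp [Finset.sum_neg_distrib]
    have main : (∑ x, ∑ y, Q i x * (C x y b * Q a y - C x y a * Q b y))
          + (∑ x, ∑ y, P i x * (A x y b * Q a y - A x y a * Q b y))
        = (∑ j, ∑ kk, A j kk i * P j a * Q b kk)
          - (∑ j, ∑ kk, A j kk i * P j b * Q a kk)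
          + 2 * (∑ j, ∑ kk, C j kk i * Q a j * Q b kk) := by
      calc (∑ x, ∑ y, Q i x * (C x y b * Q a y - C x y a * Q b y))
            + (∑ x, ∑ y, P i x * (A x y b * Q a y - A x y a * Q b y))
          = ∑ y, (Q a y * ∑ x, (A x y b * P x i + C x y b * Q i x)
              - Q b y * ∑ x, (A x y a * P x i + C x y a * Q i x)) := by
            simp only [← Finset.sum_add_distrib]
            rw [Finset.sum_comm]
            apply Finset.sum_congr rfl; intro y _
            rw [Finset.mul_sum, Finset.mul_sum, ← Finset.sum_sub_distrib]
            apply Finset.sum_congr rfl; intro x _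
            rw [hP i x]; ring
        _ = ∑ y, (Q b y * ∑ x, (A x y i * P x a + C x y i * Q a x)
              - Q a y * ∑ x, (A x y i * P x b + C x y i * Q b x)) := by
            apply Finset.sum_congr rfl; intro y _
            rw [keyA a y, keyA b y]; ring
        _ = (∑ y, ∑ x, Q b y * (A x y i * P x a)) + (∑ y, ∑ x, Q b y * (C x y i * Q a x))
            - ((∑ y, ∑ x, Q a y * (A x y i * P x b)) + (∑ y, ∑ x, Q a y * (C x y i * Q b x))) := by
            simp only [Finset.mul_sum, mul_add, Finset.sum_add_distrib, Finset.sum_sub_distrib]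
        _ = (∑ j, ∑ kk, A j kk i * P j a * Q b kk)
            - (∑ j, ∑ kk, A j kk i * P j b * Q a kk)
            + 2 * (∑ j, ∑ kk, C j kk i * Q a j * Q b kk) := by
            rw [cA1, cA2, cC1, cC2]; ring
    simp only [phiForm]
    linear_combination hδ + (1/4 : k) * main
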